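/- For integers n ≥ 2 and d ≥ 1 and real C > 0, ∑_{i=1}^{d-1} ∑_{j=0}^{n} C(n,j)·(d-i)^{j-2}·i^{n-j-2}·C^{n+d-2} ≤ 8·d^{n-2}·C^{n+d-2}, where terms with exponent base (d-i) or i raised to a negative power are interpreted as real powers. -/

import Mathlib

open Finset

private lemma sum_inv_sq_le' (m : ℕ) (hm : 1 ≤ m) :
    ∑ i ∈ Icc 1 m, (1:ℝ)/(i:ℝ)^2 ≤ 2 - 1/m := by
  induction m, hm using Nat.le_induction with
  | base => norm_num
  | succ k hk ih =>
    rw [Finset.sum_Icc_succ_top (by omega)]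
    have hk1 : (1:ℝ) ≤ (k:ℝ) := by exact_mod_cast hk
    have hk0 : (0:ℝ) < (k:ℝ) := by linarith
    have hk2 : (0:ℝ) < (k:ℝ) + 1 := by linarith
    have key : 1/((k:ℝ)+1)^2 ≤ 1/(k:ℝ) - 1/((k:ℝ)+1) := by
      rw [div_sub_div _ _ hk0.ne' hk2.ne', div_le_div_iff₀ (by positivity) (by positivity)]
      ring_nf
      nlinarith
    push_cast
    linarith

private lemma sum_inv_sq_le (m : ℕ) : ∑ i ∈ Icc 1 m, (1:ℝ)/(i:ℝ)^2 ≤ 2 := by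
  rcases Nat.eq_zero_or_pos m with h0 | h1
  · simp [h0]
  · have := sum_inv_sq_le' m h1
    have : (0:ℝ) ≤ 1/(m:ℝ) := by positivity
    linarith [sum_inv_sq_le' m h1]

private lemma refl_sum (d : ℕ) :
    ∑ i ∈ Icc 1 (d-1), (1:ℝ)/((d:ℝ)-(i:ℝ))^2 = ∑ i ∈ Icc 1 (d-1), (1:ℝ)/(i:ℝ)^2 := by
  refine Finset.sum_nbij' (fun a => d - a) (fun a => d - a) ?_ ?_ ?_ ?_ ?_
  · intro a ha; simp only [Finset.mem_Icc] at *; omega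
  · intro a ha; simp only [Finset.mem_Icc] at *; omega
  · intro a ha; simp only [Finset.mem_Icc] at ha; omega
  · intro a ha; simp only [Finset.mem_Icc] at ha; omega
  · intro a ha
    simp only [Finset.mem_Icc] at ha
    have h1 : a ≤ d := by omega
    rw [Nat.cast_sub h1]

private lemma key_sum (d : ℕ) (hd : 1 ≤ d) :
    ∑ i ∈ Icc 1 (d-1), 1/(((d:ℝ)-(i:ℝ))^2 * (i:ℝ)^2) ≤ 8/(d:ℝ)^2 := by
  have hd0 : (0:ℝ) < d := by exact_mod_cast hd
  have step : ∀ i ∈ Icc 1 (d-1),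
      1/(((d:ℝ)-(i:ℝ))^2 * (i:ℝ)^2) ≤ 2/(d:ℝ)^2 * (1/((d:ℝ)-(i:ℝ))^2 + 1/(i:ℝ)^2) := by
    intro i hi
    simp only [Finset.mem_Icc] at hi
    have hx : (1:ℝ) ≤ (i:ℝ) := by exact_mod_cast hi.1
    have hy : (1:ℝ) ≤ (d:ℝ) - (i:ℝ) := by
      have : i + 1 ≤ d := by omega
      have : ((i:ℝ) + 1) ≤ d := by exact_mod_cast this
      linarith
    set x := (i:ℝ)
    set y := (d:ℝ) - x with hyx
    have hdxy : (d:ℝ) = y + x := by rw [hyx]; ring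
    rw [hdxy]
    rw [div_add_div _ _ (by positivity) (by positivity), div_mul_div_comm,
      div_le_div_iff₀ (by positivity) (by positivity)]
    nlinarith [mul_nonneg (sq_nonneg (x - y)) (mul_nonneg (sq_nonneg x) (sq_nonneg y))]
  calc ∑ i ∈ Icc 1 (d-1), 1/(((d:ℝ)-(i:ℝ))^2 * (i:ℝ)^2)
      ≤ ∑ i ∈ Icc 1 (d-1), 2/(d:ℝ)^2 * (1/((d:ℝ)-(i:ℝ))^2 + 1/(i:ℝ)^2) :=
        Finset.sum_le_sum step
    _ = 2/(d:ℝ)^2 * (∑ i ∈ Icc 1 (d-1), (1:ℝ)/((d:ℝ)-(i:ℝ))^2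
          + ∑ i ∈ Icc 1 (d-1), (1:ℝ)/(i:ℝ)^2) := by
        rw [← Finset.sum_add_distrib, Finset.mul_sum]
    _ ≤ 2/(d:ℝ)^2 * (2 + 2) := by
        apply mul_le_mul_of_nonneg_left _ (by positivity)
        rw [refl_sum]
        linarith [sum_inv_sq_le (d-1)]
    _ = 8/(d:ℝ)^2 := by ring

private lemma inner_eq (n : ℕ) (a b : ℝ) (ha : 0 < a) (hb : 0 < b) :
    ∑ j ∈ Finset.range (n+1), (n.choose j : ℝ) * a ^ ((j:ℤ)-2) * b ^ ((n:ℤ)-(j:ℤ)-2)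
      = (a+b)^n / (a^2 * b^2) := by
  rw [add_pow, Finset.sum_div]
  apply Finset.sum_congr rfl
  intro j hj
  have hjn : j ≤ n := Nat.lt_succ_iff.mp (Finset.mem_range.mp hj)
  have h1 : a ^ ((j:ℤ)-2) = a^j / a^2 := by
    rw [show ((j:ℤ) - 2) = (j:ℤ) - ((2:ℕ):ℤ) by norm_num, zpow_sub₀ ha.ne',
      zpow_natCast, zpow_natCast]
  have h2 : b ^ ((n:ℤ)-(j:ℤ)-2) = b^(n-j) / b^2 := by
    have : (n:ℤ) - (j:ℤ) - 2 = ((n - j : ℕ):ℤ) - 2 := by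
      push_cast [hjn]; ring
    rw [this, show (((n-j:ℕ)):ℤ) - 2 = ((n-j:ℕ):ℤ) - ((2:ℕ):ℤ) by norm_num,
      zpow_sub₀ hb.ne', zpow_natCast, zpow_natCast]
  rw [h1, h2]
  field_simp

theorem stmt_15 (n d : ℕ) (hn : 2 ≤ n) (hd : 1 ≤ d) (C : ℝ) (hC : 0 < C) :
    ∑ i ∈ Finset.Icc 1 (d - 1), ∑ j ∈ Finset.range (n + 1),
        (n.choose j : ℝ) * ((d : ℝ) - (i : ℝ)) ^ ((j : ℤ) - 2) *
          (i : ℝ) ^ ((n : ℤ) - (j : ℤ) - 2) * C ^ (n + d - 2)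
      ≤ 8 * (d : ℝ) ^ ((n : ℤ) - 2) * C ^ (n + d - 2) := by
  have hd0 : (0:ℝ) < d := by exact_mod_cast hd
  have hK : (0:ℝ) < C ^ (n + d - 2) := pow_pos hC _
  have main : ∑ i ∈ Finset.Icc 1 (d - 1), ∑ j ∈ Finset.range (n + 1),
      (n.choose j : ℝ) * ((d : ℝ) - (i : ℝ)) ^ ((j : ℤ) - 2) *
        (i : ℝ) ^ ((n : ℤ) - (j : ℤ) - 2) ≤ 8 * (d : ℝ) ^ ((n : ℤ) - 2) := by
    have hstep : ∀ i ∈ Finset.Icc 1 (d-1),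
        ∑ j ∈ Finset.range (n + 1),
          (n.choose j : ℝ) * ((d : ℝ) - (i : ℝ)) ^ ((j : ℤ) - 2) *
            (i : ℝ) ^ ((n : ℤ) - (j : ℤ) - 2)
        = (d:ℝ)^n * (1/(((d:ℝ)-(i:ℝ))^2 * (i:ℝ)^2)) := by
      intro i hi
      simp only [Finset.mem_Icc] at hi
      have hx : (0:ℝ) < (i:ℝ) := by exact_mod_cast hi.1
      have hy : (0:ℝ) < (d:ℝ) - (i:ℝ) := by
        have : i + 1 ≤ d := by omega
        have : ((i:ℝ) + 1) ≤ d := by exact_mod_cast this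
        linarith
      rw [inner_eq n _ _ hy hx]
      have : ((d:ℝ) - (i:ℝ)) + (i:ℝ) = (d:ℝ) := by ring
      rw [this]
      ring
    rw [Finset.sum_congr rfl hstep, ← Finset.mul_sum]
    have h8 : 8 * (d : ℝ) ^ ((n : ℤ) - 2) = (d:ℝ)^n * (8/(d:ℝ)^2) := by
      rw [show ((n:ℤ) - 2) = (n:ℤ) - ((2:ℕ):ℤ) by norm_num, zpow_sub₀ hd0.ne',
        zpow_natCast, zpow_natCast]
      ring
    rw [h8]
    exact mul_le_mul_of_nonneg_left (key_sum d hd) (by positivity)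
  calc ∑ i ∈ Finset.Icc 1 (d - 1), ∑ j ∈ Finset.range (n + 1),
        (n.choose j : ℝ) * ((d : ℝ) - (i : ℝ)) ^ ((j : ℤ) - 2) *
          (i : ℝ) ^ ((n : ℤ) - (j : ℤ) - 2) * C ^ (n + d - 2)
      = (∑ i ∈ Finset.Icc 1 (d - 1), ∑ j ∈ Finset.range (n + 1),
        (n.choose j : ℝ) * ((d : ℝ) - (i : ℝ)) ^ ((j : ℤ) - 2) *
          (i : ℝ) ^ ((n : ℤ) - (j : ℤ) - 2)) * C ^ (n + d - 2) := by
        simp only [← Finset.sum_mul]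
    _ ≤ 8 * (d : ℝ) ^ ((n : ℤ) - 2) * C ^ (n + d - 2) :=
        mul_le_mul_of_nonneg_right main hK.le
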